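/- (Hoeffding/Newman covariance identity) For real random variables U, V with suitable integrability, and continuously differentiable functions f, g with integrable derivatives, Cov(f(U), g(V)) = ∫∫ f'(u) g'(v) H_{U,V}(u,v) du dv, where H_{U,V}(u,v) = P(U ≥ u, V ≥ v) − P(U ≥ u)P(V ≥ v). -/

import Mathlib

open MeasureTheory Filter

section helpers
lemma ftc_Ioc {f f' : ℝ → ℝ} (hf : ∀ x, HasDerivAt f (f' x) x) (hf' : Continuous f')
    {a c : ℝ} (hac : a ≤ c) : ∫ u in Set.Ioc a c, f' u = f c - f a := by
  rw [← intervalIntegral.integral_of_le hac]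
  exact intervalIntegral.integral_eq_sub_of_hasDerivAt (fun x _ => hf x)
    (hf'.intervalIntegrable a c)

lemma clamp_ftc {f f' : ℝ → ℝ} (hf : ∀ x, HasDerivAt f (f' x) x) (hf' : Continuous f')
    {a b : ℝ} (hab : a ≤ b) (x : ℝ) :
    ∫ u in Set.Ioc a b, (f' u * (if u ≤ x then 1 else 0)) = f (max a (min b x)) - f a := by
  rcases le_or_gt a x with hax | hax
  · have h1 : ∀ u, f' u * (if u ≤ x then 1 else 0) = (Set.Iic x).indicator f' u := by
      intro u; by_cases h : u ≤ x <;> simp [Set.indicator, h]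
    simp_rw [h1]
    rw [setIntegral_indicator measurableSet_Iic]
    have h2 : Set.Ioc a b ∩ Set.Iic x = Set.Ioc a (min b x) := Set.Ioc_inter_Iic _ _ _
    rw [h2, ftc_Ioc hf hf' (le_min hab hax)]
    rw [max_eq_right (le_min hab hax)]
  · have h1 : ∀ u ∈ Set.Ioc a b, f' u * (if u ≤ x then 1 else 0) = 0 := by
      intro u hu
      have : ¬ u ≤ x := by linarith [hu.1]
      simp [this]
    rw [setIntegral_congr_fun measurableSet_Ioc h1]
    have h3 : max a (min b x) = a := by
      rw [min_eq_right (le_of_lt (lt_of_lt_of_le hax hab)), max_eq_left (le_of_lt hax)]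
    simp [h3]

lemma bddIntegrableOn {α : Type*} [MeasurableSpace α] {μ : Measure α} {s : Set α}
    (hs : MeasurableSet s) (hμs : μ s < ⊤) {φ : α → ℝ}
    (hφ : AEStronglyMeasurable φ (μ.restrict s)) {C : ℝ}
    (hC : ∀ x ∈ s, |φ x| ≤ C) : IntegrableOn φ s μ := by
  haveI : IsFiniteMeasure (μ.restrict s) := ⟨by rwa [Measure.restrict_apply_univ]⟩
  apply Integrable.mono' (integrable_const C) hφ
  filter_upwards [ae_restrict_mem hs] with x hx using by
    simpa [Real.norm_eq_abs] using hC x hx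

lemma ae_prod_fst_mem {α β : Type*} [MeasurableSpace α] [MeasurableSpace β]
    (μ : Measure α) (ν : Measure β) [SFinite ν] {s : Set α} (hs : MeasurableSet s) :
    ∀ᵐ z ∂((μ.restrict s).prod ν), z.1 ∈ s := by
  rw [ae_iff]
  have hsub : {z : α × β | ¬ z.1 ∈ s} ⊆ sᶜ ×ˢ Set.univ := by
    intro z hz
    simp only [Set.mem_setOf_eq] at hz
    exact ⟨hz, Set.mem_univ _⟩
  refine measure_mono_null hsub ?_
  rw [Measure.prod_prod]
  have h0 : (μ.restrict s) sᶜ = 0 := by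
    rw [Measure.restrict_apply hs.compl]; simp
  rw [h0, zero_mul]
end helpers

lemma rect_identity {Ω : Type*} [MeasurableSpace Ω] (μ : Measure Ω) [IsProbabilityMeasure μ]
    (U V : Ω → ℝ) (hU : Measurable U) (hV : Measurable V)
    (f g f' g' : ℝ → ℝ)
    (hf : ∀ x, HasDerivAt f (f' x) x) (hg : ∀ x, HasDerivAt g (g' x) x)
    (hf' : Continuous f') (hg' : Continuous g')
    {a b c d : ℝ} (hab : a ≤ b) (hcd : c ≤ d) :
    ∫ p in (Set.Ioc a b) ×ˢ (Set.Ioc c d), f' p.1 * g' p.2 *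
        ((μ {ω | p.1 ≤ U ω ∧ p.2 ≤ V ω}).toReal
         - (μ {ω | p.1 ≤ U ω}).toReal * (μ {ω | p.2 ≤ V ω}).toReal)
      = (∫ ω, (f (max a (min b (U ω))) - f a) * (g (max c (min d (V ω))) - g c) ∂μ)
        - (∫ ω, (f (max a (min b (U ω))) - f a) ∂μ)
          * (∫ ω, (g (max c (min d (V ω))) - g c) ∂μ) := by
  classical
  obtain ⟨Cf, hCf⟩ : ∃ C, ∀ u ∈ Set.Icc a b, |f' u| ≤ C := by
    obtain ⟨C, hC⟩ := isCompact_Icc.exists_bound_of_continuousOn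
      (hf'.continuousOn (s := Set.Icc a b))
    exact ⟨C, fun u hu => by simpa [Real.norm_eq_abs] using hC u hu⟩
  obtain ⟨Cg, hCg⟩ : ∃ C, ∀ v ∈ Set.Icc c d, |g' v| ≤ C := by
    obtain ⟨C, hC⟩ := isCompact_Icc.exists_bound_of_continuousOn
      (hg'.continuousOn (s := Set.Icc c d))
    exact ⟨C, fun v hv => by simpa [Real.norm_eq_abs] using hC v hv⟩
  -- measurability of the measure-functions
  have hrmeas : Measurable (fun p : ℝ × ℝ => (μ {ω | p.1 ≤ U ω ∧ p.2 ≤ V ω}).toReal) := by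
    have hA : MeasurableSet {z : (ℝ × ℝ) × Ω | z.1.1 ≤ U z.2 ∧ z.1.2 ≤ V z.2} := by
      have h1 : MeasurableSet {z : (ℝ × ℝ) × Ω | z.1.1 ≤ U z.2} :=
        measurableSet_le (measurable_fst.comp measurable_fst) (hU.comp measurable_snd)
      have h2 : MeasurableSet {z : (ℝ × ℝ) × Ω | z.1.2 ≤ V z.2} :=
        measurableSet_le (measurable_snd.comp measurable_fst) (hV.comp measurable_snd)
      exact h1.inter h2
    exact (measurable_measure_prodMk_left hA).ennreal_toReal
  have hpmeas : Measurable (fun u : ℝ => (μ {ω | u ≤ U ω}).toReal) := by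
    have hA : MeasurableSet {z : ℝ × Ω | z.1 ≤ U z.2} :=
      measurableSet_le measurable_fst (hU.comp measurable_snd)
    exact (measurable_measure_prodMk_left hA).ennreal_toReal
  have hqmeas : Measurable (fun v : ℝ => (μ {ω | v ≤ V ω}).toReal) := by
    have hA : MeasurableSet {z : ℝ × Ω | z.1 ≤ V z.2} :=
      measurableSet_le measurable_fst (hV.comp measurable_snd)
    exact (measurable_measure_prodMk_left hA).ennreal_toReal
  have htoReal_le_one : ∀ s : Set Ω, (μ s).toReal ≤ 1 := by
    intro s
    rw [← ENNReal.toReal_one]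
    exact ENNReal.toReal_mono (by simp) prob_le_one
  have htoReal_nonneg : ∀ s : Set Ω, 0 ≤ (μ s).toReal := fun s => ENNReal.toReal_nonneg
  set S : Set (ℝ × ℝ) := (Set.Ioc a b) ×ˢ (Set.Ioc c d) with hSdef
  have hSmeas : MeasurableSet S := measurableSet_Ioc.prod measurableSet_Ioc
  have hSfin : (volume : Measure (ℝ × ℝ)) S < ⊤ := by
    rw [hSdef, Measure.volume_eq_prod, Measure.prod_prod]
    exact ENNReal.mul_lt_top measure_Ioc_lt_top measure_Ioc_lt_top

  -- indicator representations
  have hmU : ∀ u : ℝ, MeasurableSet {ω | u ≤ U ω} :=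
    fun u => measurableSet_le measurable_const hU
  have hmV : ∀ v : ℝ, MeasurableSet {ω | v ≤ V ω} :=
    fun v => measurableSet_le measurable_const hV
  have hp : ∀ u : ℝ, (μ {ω | u ≤ U ω}).toReal
      = ∫ ω, (if u ≤ U ω then (1:ℝ) else 0) ∂μ := by
    intro u
    rw [← measureReal_def, ← integral_indicator_one (hmU u)]
    apply integral_congr_ae
    filter_upwards with ω
    by_cases h : u ≤ U ω <;> simp [Set.indicator, h]
  have hq : ∀ v : ℝ, (μ {ω | v ≤ V ω}).toReal
      = ∫ ω, (if v ≤ V ω then (1:ℝ) else 0) ∂μ := by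
    intro v
    rw [← measureReal_def, ← integral_indicator_one (hmV v)]
    apply integral_congr_ae
    filter_upwards with ω
    by_cases h : v ≤ V ω <;> simp [Set.indicator, h]
  have hr : ∀ p : ℝ × ℝ, (μ {ω | p.1 ≤ U ω ∧ p.2 ≤ V ω}).toReal
      = ∫ ω, (if p.1 ≤ U ω then (1:ℝ) else 0) * (if p.2 ≤ V ω then (1:ℝ) else 0) ∂μ := by
    intro p
    have hm : MeasurableSet {ω | p.1 ≤ U ω ∧ p.2 ≤ V ω} := by
      have : {ω | p.1 ≤ U ω ∧ p.2 ≤ V ω} = {ω | p.1 ≤ U ω} ∩ {ω | p.2 ≤ V ω} := rfl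
      rw [this]; exact (hmU p.1).inter (hmV p.2)
    rw [← measureReal_def, ← integral_indicator_one hm]
    apply integral_congr_ae
    filter_upwards with ω
    by_cases h1 : p.1 ≤ U ω <;> by_cases h2 : p.2 ≤ V ω <;>
      simp [Set.indicator, h1, h2]
  haveI hfinS : IsFiniteMeasure ((volume : Measure (ℝ × ℝ)).restrict S) :=
    ⟨by rwa [Measure.restrict_apply_univ]⟩
  have hCf0 : 0 ≤ Cf := le_trans (abs_nonneg _) (hCf a ⟨le_refl a, hab⟩)
  have hCg0 : 0 ≤ Cg := le_trans (abs_nonneg _) (hCg c ⟨le_refl c, hcd⟩)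
  -- Term 1 Fubini
  have hC1 : ∫ p in S, f' p.1 * g' p.2 * (μ {ω | p.1 ≤ U ω ∧ p.2 ≤ V ω}).toReal
      = ∫ ω, (f (max a (min b (U ω))) - f a) * (g (max c (min d (V ω))) - g c) ∂μ := by
    have step1 : ∀ p : ℝ × ℝ, f' p.1 * g' p.2 * (μ {ω | p.1 ≤ U ω ∧ p.2 ≤ V ω}).toReal
        = ∫ ω, (f' p.1 * (if p.1 ≤ U ω then (1:ℝ) else 0))
            * (g' p.2 * (if p.2 ≤ V ω then (1:ℝ) else 0)) ∂μ := by
      intro p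
      rw [hr p, ← integral_const_mul]
      apply integral_congr_ae
      filter_upwards with ω
      ring
    have hΦint : Integrable
        (Function.uncurry fun (p : ℝ × ℝ) (ω : Ω) =>
          (f' p.1 * (if p.1 ≤ U ω then (1:ℝ) else 0))
            * (g' p.2 * (if p.2 ≤ V ω then (1:ℝ) else 0)))
        (((volume : Measure (ℝ × ℝ)).restrict S).prod μ) := by
      apply Integrable.mono' (integrable_const (Cf * Cg))
      · apply Measurable.aestronglyMeasurable
        apply Measurable.mul
        · apply Measurable.mul
          · exact hf'.measurable.comp (measurable_fst.comp measurable_fst)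
          · exact Measurable.ite
              (measurableSet_le (measurable_fst.comp measurable_fst)
                (hU.comp measurable_snd)) measurable_const measurable_const
        · apply Measurable.mul
          · exact hg'.measurable.comp (measurable_snd.comp measurable_fst)
          · exact Measurable.ite
              (measurableSet_le (measurable_snd.comp measurable_fst)
                (hV.comp measurable_snd)) measurable_const measurable_const
      · filter_upwards [ae_prod_fst_mem (volume : Measure (ℝ × ℝ)) μ hSmeas] with z hz
        have hz1 : z.1.1 ∈ Set.Icc a b := Set.Ioc_subset_Icc_self hz.1
        have hz2 : z.1.2 ∈ Set.Icc c d := Set.Ioc_subset_Icc_self hz.2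
        have e1 : |f' z.1.1 * (if z.1.1 ≤ U z.2 then (1:ℝ) else 0)| ≤ Cf := by
          by_cases h : z.1.1 ≤ U z.2 <;> simp [h, abs_mul]
          · exact hCf _ hz1
          · exact hCf0
        have e2 : |g' z.1.2 * (if z.1.2 ≤ V z.2 then (1:ℝ) else 0)| ≤ Cg := by
          by_cases h : z.1.2 ≤ V z.2 <;> simp [h, abs_mul]
          · exact hCg _ hz2
          · exact hCg0
        have hfin : |(f' z.1.1 * (if z.1.1 ≤ U z.2 then (1:ℝ) else 0))
            * (g' z.1.2 * (if z.1.2 ≤ V z.2 then (1:ℝ) else 0))| ≤ Cf * Cg := by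
          rw [abs_mul]
          exact mul_le_mul e1 e2 (abs_nonneg _) hCf0
        simp only [Function.uncurry, Real.norm_eq_abs]
        exact hfin
    calc ∫ p in S, f' p.1 * g' p.2 * (μ {ω | p.1 ≤ U ω ∧ p.2 ≤ V ω}).toReal
        = ∫ p in S, ∫ ω, (f' p.1 * (if p.1 ≤ U ω then (1:ℝ) else 0))
            * (g' p.2 * (if p.2 ≤ V ω then (1:ℝ) else 0)) ∂μ := by
          apply integral_congr_ae
          filter_upwards with p using step1 p
      _ = ∫ ω, (∫ p in S, (f' p.1 * (if p.1 ≤ U ω then (1:ℝ) else 0))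
            * (g' p.2 * (if p.2 ≤ V ω then (1:ℝ) else 0))) ∂μ := by
          exact integral_integral_swap hΦint
      _ = ∫ ω, (f (max a (min b (U ω))) - f a) * (g (max c (min d (V ω))) - g c) ∂μ := by
          apply integral_congr_ae
          filter_upwards with ω
          have hfact : ∫ p in S, (f' p.1 * (if p.1 ≤ U ω then (1:ℝ) else 0))
              * (g' p.2 * (if p.2 ≤ V ω then (1:ℝ) else 0))
              = (∫ u in Set.Ioc a b, f' u * (if u ≤ U ω then (1:ℝ) else 0))
                * (∫ v in Set.Ioc c d, g' v * (if v ≤ V ω then (1:ℝ) else 0)) := by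
            rw [hSdef]
            rw [Measure.volume_eq_prod, ← Measure.prod_restrict]
            exact integral_prod_mul (μ := volume.restrict (Set.Ioc a b))
              (ν := volume.restrict (Set.Ioc c d))
              (fun u => f' u * (if u ≤ U ω then (1:ℝ) else 0))
              (fun v => g' v * (if v ≤ V ω then (1:ℝ) else 0))
          rw [hfact, clamp_ftc hf hf' hab (U ω), clamp_ftc hg hg' hcd (V ω)]

  -- 1-D Fubini terms
  haveI hfinI : IsFiniteMeasure ((volume : Measure ℝ).restrict (Set.Ioc a b)) :=
    ⟨by rw [Measure.restrict_apply_univ]; exact measure_Ioc_lt_top⟩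
  haveI hfinI' : IsFiniteMeasure ((volume : Measure ℝ).restrict (Set.Ioc c d)) :=
    ⟨by rw [Measure.restrict_apply_univ]; exact measure_Ioc_lt_top⟩
  have hC2a : (∫ u in Set.Ioc a b, f' u * (μ {ω | u ≤ U ω}).toReal)
      = ∫ ω, (f (max a (min b (U ω))) - f a) ∂μ := by
    have hint' : Integrable
        (Function.uncurry fun (u : ℝ) (ω : Ω) => f' u * (if u ≤ U ω then (1:ℝ) else 0))
        (((volume : Measure ℝ).restrict (Set.Ioc a b)).prod μ) := by
      apply Integrable.mono' (integrable_const Cf)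
      · apply Measurable.aestronglyMeasurable
        apply Measurable.mul
        · exact hf'.measurable.comp measurable_fst
        · exact Measurable.ite
            (measurableSet_le measurable_fst (hU.comp measurable_snd))
            measurable_const measurable_const
      · filter_upwards [ae_prod_fst_mem (volume : Measure ℝ) μ measurableSet_Ioc] with z hz
        have e1 : |f' z.1 * (if z.1 ≤ U z.2 then (1:ℝ) else 0)| ≤ Cf := by
          by_cases h : z.1 ≤ U z.2 <;> simp [h, abs_mul]
          · exact hCf _ (Set.Ioc_subset_Icc_self hz)
          · exact hCf0
        simp only [Function.uncurry, Real.norm_eq_abs]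
        exact e1
    calc ∫ u in Set.Ioc a b, f' u * (μ {ω | u ≤ U ω}).toReal
        = ∫ u in Set.Ioc a b, (∫ ω, f' u * (if u ≤ U ω then (1:ℝ) else 0) ∂μ) := by
          apply integral_congr_ae
          filter_upwards with u
          rw [hp u, ← integral_const_mul]
      _ = ∫ ω, (∫ u in Set.Ioc a b, f' u * (if u ≤ U ω then (1:ℝ) else 0)) ∂μ :=
          integral_integral_swap hint'
      _ = ∫ ω, (f (max a (min b (U ω))) - f a) ∂μ := by
          apply integral_congr_ae
          filter_upwards with ω
          exact clamp_ftc hf hf' hab (U ω)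
  have hC2b : (∫ v in Set.Ioc c d, g' v * (μ {ω | v ≤ V ω}).toReal)
      = ∫ ω, (g (max c (min d (V ω))) - g c) ∂μ := by
    have hint' : Integrable
        (Function.uncurry fun (v : ℝ) (ω : Ω) => g' v * (if v ≤ V ω then (1:ℝ) else 0))
        (((volume : Measure ℝ).restrict (Set.Ioc c d)).prod μ) := by
      apply Integrable.mono' (integrable_const Cg)
      · apply Measurable.aestronglyMeasurable
        apply Measurable.mul
        · exact hg'.measurable.comp measurable_fst
        · exact Measurable.ite
            (measurableSet_le measurable_fst (hV.comp measurable_snd))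
            measurable_const measurable_const
      · filter_upwards [ae_prod_fst_mem (volume : Measure ℝ) μ measurableSet_Ioc] with z hz
        have e1 : |g' z.1 * (if z.1 ≤ V z.2 then (1:ℝ) else 0)| ≤ Cg := by
          by_cases h : z.1 ≤ V z.2 <;> simp [h, abs_mul]
          · exact hCg _ (Set.Ioc_subset_Icc_self hz)
          · exact hCg0
        simp only [Function.uncurry, Real.norm_eq_abs]
        exact e1
    calc ∫ v in Set.Ioc c d, g' v * (μ {ω | v ≤ V ω}).toReal
        = ∫ v in Set.Ioc c d, (∫ ω, g' v * (if v ≤ V ω then (1:ℝ) else 0) ∂μ) := by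
          apply integral_congr_ae
          filter_upwards with v
          rw [hq v, ← integral_const_mul]
      _ = ∫ ω, (∫ v in Set.Ioc c d, g' v * (if v ≤ V ω then (1:ℝ) else 0)) ∂μ :=
          integral_integral_swap hint'
      _ = ∫ ω, (g (max c (min d (V ω))) - g c) ∂μ := by
          apply integral_congr_ae
          filter_upwards with ω
          exact clamp_ftc hg hg' hcd (V ω)
  have hC2 : ∫ p in S, f' p.1 * g' p.2
        * ((μ {ω | p.1 ≤ U ω}).toReal * (μ {ω | p.2 ≤ V ω}).toReal)
      = (∫ ω, (f (max a (min b (U ω))) - f a) ∂μ)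
        * (∫ ω, (g (max c (min d (V ω))) - g c) ∂μ) := by
    have hre : ∫ p in S, f' p.1 * g' p.2
          * ((μ {ω | p.1 ≤ U ω}).toReal * (μ {ω | p.2 ≤ V ω}).toReal)
        = ∫ p in S, (f' p.1 * (μ {ω | p.1 ≤ U ω}).toReal)
          * (g' p.2 * (μ {ω | p.2 ≤ V ω}).toReal) := by
      apply integral_congr_ae
      filter_upwards with p
      ring
    rw [hre, hSdef, Measure.volume_eq_prod, ← Measure.prod_restrict]
    rw [integral_prod_mul (μ := volume.restrict (Set.Ioc a b))
      (ν := volume.restrict (Set.Ioc c d))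
      (fun u => f' u * (μ {ω | u ≤ U ω}).toReal)
      (fun v => g' v * (μ {ω | v ≤ V ω}).toReal)]
    rw [hC2a, hC2b]
  -- integrability of both pieces on S
  have hXint : IntegrableOn
      (fun p : ℝ × ℝ => f' p.1 * g' p.2 * (μ {ω | p.1 ≤ U ω ∧ p.2 ≤ V ω}).toReal) S volume := by
    apply bddIntegrableOn hSmeas hSfin
    · exact (((hf'.measurable.comp measurable_fst).mul
        (hg'.measurable.comp measurable_snd)).mul hrmeas).aestronglyMeasurable.restrict
    · intro p hp'
      calc |f' p.1 * g' p.2 * (μ {ω | p.1 ≤ U ω ∧ p.2 ≤ V ω}).toReal|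
          = |f' p.1| * |g' p.2| * |(μ {ω | p.1 ≤ U ω ∧ p.2 ≤ V ω}).toReal| := by
            rw [abs_mul, abs_mul]
        _ ≤ Cf * Cg * 1 := by
            apply mul_le_mul
            · exact mul_le_mul (hCf _ (Set.Ioc_subset_Icc_self hp'.1))
                (hCg _ (Set.Ioc_subset_Icc_self hp'.2)) (abs_nonneg _) hCf0
            · rw [abs_of_nonneg (htoReal_nonneg _)]
              exact htoReal_le_one _
            · exact abs_nonneg _
            · exact mul_nonneg hCf0 hCg0
        _ = Cf * Cg := mul_one _
  have hYint : IntegrableOn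
      (fun p : ℝ × ℝ => f' p.1 * g' p.2
        * ((μ {ω | p.1 ≤ U ω}).toReal * (μ {ω | p.2 ≤ V ω}).toReal)) S volume := by
    apply bddIntegrableOn hSmeas hSfin
    · exact (((hf'.measurable.comp measurable_fst).mul
        (hg'.measurable.comp measurable_snd)).mul
        ((hpmeas.comp measurable_fst).mul (hqmeas.comp measurable_snd))).aestronglyMeasurable.restrict
    · intro p hp'
      calc |f' p.1 * g' p.2 * ((μ {ω | p.1 ≤ U ω}).toReal * (μ {ω | p.2 ≤ V ω}).toReal)|
          = |f' p.1| * |g' p.2| * |(μ {ω | p.1 ≤ U ω}).toReal * (μ {ω | p.2 ≤ V ω}).toReal| := by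
            rw [abs_mul, abs_mul]
        _ ≤ Cf * Cg * 1 := by
            apply mul_le_mul
            · exact mul_le_mul (hCf _ (Set.Ioc_subset_Icc_self hp'.1))
                (hCg _ (Set.Ioc_subset_Icc_self hp'.2)) (abs_nonneg _) hCf0
            · rw [abs_mul, abs_of_nonneg (htoReal_nonneg _), abs_of_nonneg (htoReal_nonneg _)]
              exact mul_le_one₀ (htoReal_le_one _) (htoReal_nonneg _) (htoReal_le_one _)
            · exact abs_nonneg _
            · exact mul_nonneg hCf0 hCg0
        _ = Cf * Cg := mul_one _
  have hsplit : ∫ p in S, f' p.1 * g' p.2 *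
        ((μ {ω | p.1 ≤ U ω ∧ p.2 ≤ V ω}).toReal
         - (μ {ω | p.1 ≤ U ω}).toReal * (μ {ω | p.2 ≤ V ω}).toReal)
      = (∫ p in S, f' p.1 * g' p.2 * (μ {ω | p.1 ≤ U ω ∧ p.2 ≤ V ω}).toReal)
        - ∫ p in S, f' p.1 * g' p.2
            * ((μ {ω | p.1 ≤ U ω}).toReal * (μ {ω | p.2 ≤ V ω}).toReal) := by
    rw [← integral_sub hXint hYint]
    apply integral_congr_ae
    filter_upwards with p
    ring
  rw [hsplit, hC1, hC2]

lemma tail_tendsto {Ω : Type*} [MeasurableSpace Ω] (μ : Measure Ω) (X : Ω → ℝ)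
    (hX : Measurable X) (ψ : Ω → ℝ) (hψ : Integrable ψ μ) :
    Tendsto (fun n : ℕ => ∫ ω in {ω | (n : ℝ) ≤ X ω}, ψ ω ∂μ) atTop (nhds 0) := by
  have hmeas : ∀ n : ℕ, MeasurableSet {ω | (n : ℝ) ≤ X ω} :=
    fun n => measurableSet_le measurable_const hX
  have heq : ∀ n : ℕ, ∫ ω in {ω | (n : ℝ) ≤ X ω}, ψ ω ∂μ
      = ∫ ω, Set.indicator {ω | (n : ℝ) ≤ X ω} ψ ω ∂μ :=
    fun n => (integral_indicator (hmeas n)).symm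
  simp_rw [heq]
  have h0 : (0 : ℝ) = ∫ ω, (0 : ℝ) ∂μ := by simp
  rw [h0]
  apply tendsto_integral_of_dominated_convergence (fun ω => |ψ ω|)
  · exact fun n => hψ.aestronglyMeasurable.indicator (hmeas n)
  · exact hψ.abs
  · intro n
    filter_upwards with ω
    by_cases h : ω ∈ {ω | (n : ℝ) ≤ X ω} <;>
      simp [Set.indicator, h, abs_nonneg, Real.norm_eq_abs, le_abs_self]
  · filter_upwards with ω
    obtain ⟨N, hN⟩ := exists_nat_gt (X ω)
    apply tendsto_const_nhds.congr'
    filter_upwards [eventually_ge_atTop N] with n hn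
    have : ¬ ((n : ℝ) ≤ X ω) := by
      push_neg
      exact lt_of_lt_of_le hN (by exact_mod_cast hn)
    simp [Set.indicator, this]

lemma tail_small {Ω : Type*} [MeasurableSpace Ω] (μ : Measure Ω) (X : Ω → ℝ)
    (hX : Measurable X) (ψ : Ω → ℝ) (hψ : Integrable ψ μ) (k δ : ℝ) (hδ : 0 < δ) :
    ∃ K : ℝ, k ≤ K ∧ ∫ ω in {ω | K ≤ X ω}, ψ ω ∂μ ≤ δ := by
  have ht := tail_tendsto μ X hX ψ hψ
  have h1 : ∀ᶠ n : ℕ in atTop, (∫ ω in {ω | (n : ℝ) ≤ X ω}, ψ ω ∂μ) ≤ δ :=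
    ht.eventually (eventually_le_nhds hδ)
  obtain ⟨n, hn1, hn2⟩ := (h1.and (eventually_ge_atTop ⌈k⌉₊)).exists
  exact ⟨(n : ℝ), le_trans (Nat.le_ceil k) (by exact_mod_cast hn2), hn1⟩

lemma tail_choice {Ω : Type*} [MeasurableSpace Ω] (μ : Measure Ω) [IsFiniteMeasure μ]
    (X : Ω → ℝ) (hX : Measurable X) (w : Ω → ℝ) (hw1 : ∀ ω, 1 ≤ w ω)
    (hwi : Integrable w μ) (h : ℝ → ℝ) (hh : ∀ x, 0 ≤ h x)
    (hint : Integrable (fun ω => h (X ω) * w ω) μ) (K : ℝ) :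
    ∃ b, K ≤ b ∧
      h b * ∫ ω in {ω | b ≤ X ω}, w ω ∂μ ≤
        2 * ∫ ω in {ω | K ≤ X ω}, h (X ω) * w ω ∂μ := by
  set ε := ∫ ω in {ω | K ≤ X ω}, h (X ω) * w ω ∂μ with hε
  set G : ℝ → ℝ := fun b => ∫ ω in {ω | b ≤ X ω}, w ω ∂μ with hG
  have hwnn : ∀ ω, 0 ≤ w ω := fun ω => le_trans zero_le_one (hw1 ω)
  have hεnn : 0 ≤ ε := setIntegral_nonneg (measurableSet_le measurable_const hX)
    (fun ω _ => mul_nonneg (hh _) (hwnn ω))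
  by_contra hcon
  push_neg at hcon
  have hcon' : ∀ b, K ≤ b → 2 * ε < h b * G b := hcon
  have hGnn : ∀ b, 0 ≤ G b := fun b => setIntegral_nonneg
    (measurableSet_le measurable_const hX) (fun ω _ => hwnn ω)
  have hGmono : ∀ b, K ≤ b → G b ≤ G K := by
    intro b hb
    apply setIntegral_mono_set hwi.integrableOn (Filter.Eventually.of_forall hwnn)
    exact Filter.Eventually.of_forall (fun ω hω => le_trans hb hω)
  have hmeasK : MeasurableSet {ω | K ≤ X ω} := measurableSet_le measurable_const hX
  have hGpos : ∀ b, K ≤ b → 0 < G b := by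
    intro b hb
    rcases lt_or_ge 0 (G b) with hp | hp
    · exact hp
    · have hz : G b = 0 := le_antisymm hp (hGnn b)
      have h2 := hcon' b hb
      rw [hz, mul_zero] at h2
      linarith
  have hε0 : ε = 0 := by
    by_contra hne
    have hεpos : 0 < ε := lt_of_le_of_ne hεnn (Ne.symm hne)
    have ht : 0 < G K := hGpos K le_rfl
    have key : ∀ ω, K ≤ X ω → 2 * ε / G K ≤ h (X ω) := by
      intro ω hω
      have h1 : 2 * ε < h (X ω) * G (X ω) := hcon' (X ω) hω
      have h2 : G (X ω) ≤ G K := hGmono _ hω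
      rw [div_le_iff₀ ht]
      calc 2 * ε ≤ h (X ω) * G (X ω) := le_of_lt h1
        _ ≤ h (X ω) * G K := mul_le_mul_of_nonneg_left h2 (hh _)
    have : 2 * ε ≤ ε := by
      calc 2 * ε = (2 * ε / G K) * G K := by field_simp
        _ = ∫ ω in {ω | K ≤ X ω}, (2 * ε / G K) * w ω ∂μ := by
            rw [integral_const_mul]
        _ ≤ ∫ ω in {ω | K ≤ X ω}, h (X ω) * w ω ∂μ := by
            apply setIntegral_mono_on (hwi.integrableOn.const_mul _)
              hint.integrableOn hmeasK
            intro ω hω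
            exact mul_le_mul_of_nonneg_right (key ω hω) (hwnn ω)
        _ = ε := rfl
    linarith
  have hμK : μ {ω | K ≤ X ω} ≠ 0 := by
    intro h0
    have : G K = 0 := by
      rw [hG]; simp [Measure.restrict_eq_zero.mpr h0]
    have := hGpos K le_rfl
    linarith
  have hae : ∀ᵐ ω ∂(μ.restrict {ω | K ≤ X ω}), h (X ω) * w ω = 0 := by
    have := (integral_eq_zero_iff_of_nonneg
      (fun ω => mul_nonneg (hh _) (hwnn ω)) hint.integrableOn).mp (by rw [← hε, hε0])
    filter_upwards [this] with ω hω using hω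
  have hae' : ∀ᵐ ω ∂μ, K ≤ X ω → h (X ω) = 0 := by
    have h2 := (ae_restrict_iff' hmeasK).mp (by
      filter_upwards [hae] with ω hω
      · rcases mul_eq_zero.mp hω with h1 | h1
        · exact h1
        · exfalso; have := hw1 ω; rw [h1] at this; linarith)
    filter_upwards [h2] with ω hω using hω
  have hnull : μ ({ω | K ≤ X ω} ∩ {ω | h (X ω) ≠ 0}) = 0 := by
    refine measure_mono_null ?_ (ae_iff.mp hae')
    intro ω hω
    simp only [Set.mem_setOf_eq] at *
    exact fun hc => hω.2 (hc hω.1)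
  have hpos : μ ({ω | K ≤ X ω} ∩ {ω | h (X ω) = 0}) ≠ 0 := by
    intro h0
    apply hμK
    have hsub : {ω | K ≤ X ω} ⊆ ({ω | K ≤ X ω} ∩ {ω | h (X ω) = 0}) ∪
        ({ω | K ≤ X ω} ∩ {ω | h (X ω) ≠ 0}) := by
      intro ω hω
      by_cases hc : h (X ω) = 0
      · exact Or.inl ⟨hω, hc⟩
      · exact Or.inr ⟨hω, hc⟩
    refine le_antisymm ?_ (by positivity)
    calc μ {ω | K ≤ X ω} ≤ μ _ := measure_mono hsub
      _ ≤ _ + _ := measure_union_le _ _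
      _ = 0 := by rw [h0, hnull]; simp
  obtain ⟨ω₀, hω₀⟩ := nonempty_of_measure_ne_zero hpos
  have h1 : 2 * ε < h (X ω₀) * G (X ω₀) := hcon' (X ω₀) hω₀.1
  rw [hω₀.2, zero_mul, hε0] at h1
  linarith

lemma choose_cut {Ω : Type*} [MeasurableSpace Ω] (μ : Measure Ω) [IsFiniteMeasure μ]
    (X : Ω → ℝ) (hX : Measurable X) (w : Ω → ℝ) (hw1 : ∀ ω, 1 ≤ w ω)
    (hwi : Integrable w μ) (h : ℝ → ℝ) (hh : ∀ x, 0 ≤ h x)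
    (hint : Integrable (fun ω => h (X ω) * w ω) μ) (k δ : ℝ) (hδ : 0 < δ) :
    ∃ b, k ≤ b ∧ h b * ∫ ω in {ω | b ≤ X ω}, w ω ∂μ ≤ δ := by
  obtain ⟨K, hKk, hKtail⟩ := tail_small μ X hX _ hint k (δ / 2) (by linarith)
  obtain ⟨b, hbK, hb⟩ := tail_choice μ X hX w hw1 hwi h hh hint K
  exact ⟨b, le_trans hKk hbK, le_trans hb (by linarith)⟩

lemma setIntegral_union_le_two {α : Type*} [MeasurableSpace α] {μ : Measure α} {h : α → ℝ}
    (hnn : ∀ x, 0 ≤ h x) (hint : Integrable h μ) {A B : Set α}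
    (hA : MeasurableSet A) (hB : MeasurableSet B) :
    ∫ x in A ∪ B, h x ∂μ ≤ (∫ x in A, h x ∂μ) + ∫ x in B, h x ∂μ := by
  rw [← Set.union_diff_self, setIntegral_union
    (Set.disjoint_sdiff_right) (hB.diff hA)
    hint.integrableOn hint.integrableOn]
  refine add_le_add le_rfl ?_
  exact setIntegral_mono_set hint.integrableOn (Filter.Eventually.of_forall hnn)
    (Filter.Eventually.of_forall (fun x hx => hx.1))

lemma setIntegral_union_le_four {α : Type*} [MeasurableSpace α] {μ : Measure α} {h : α → ℝ}
    (hnn : ∀ x, 0 ≤ h x) (hint : Integrable h μ) {E A B C D : Set α}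
    (hA : MeasurableSet A) (hB : MeasurableSet B) (hC : MeasurableSet C)
    (hD : MeasurableSet D) (hsub : E ⊆ A ∪ B ∪ C ∪ D) :
    ∫ x in E, h x ∂μ ≤ (∫ x in A, h x ∂μ) + (∫ x in B, h x ∂μ)
      + (∫ x in C, h x ∂μ) + ∫ x in D, h x ∂μ := by
  have h1 : ∫ x in E, h x ∂μ ≤ ∫ x in A ∪ B ∪ C ∪ D, h x ∂μ :=
    setIntegral_mono_set hint.integrableOn (Filter.Eventually.of_forall hnn)
      (HasSubset.Subset.eventuallyLE hsub)
  have h2 := setIntegral_union_le_two hnn hint ((hA.union hB).union hC) hD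
  have h3 := setIntegral_union_le_two hnn hint (hA.union hB) hC
  have h4 := setIntegral_union_le_two hnn hint hA hB
  linarith

set_option maxHeartbeats 1000000 in
/-- Hoeffding/Newman covariance identity:
`Cov(f(U), g(V)) = ∬ f'(u) g'(v) H(u,v) du dv`, where
`H(u,v) = P(U ≥ u, V ≥ v) − P(U ≥ u) P(V ≥ v)`. -/
theorem hoeffding_covariance_identity
    {Ω : Type*} [MeasurableSpace Ω] (μ : Measure Ω) [IsProbabilityMeasure μ]
    (U V : Ω → ℝ) (hU : Measurable U) (hV : Measurable V)
    (f g f' g' : ℝ → ℝ)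
    (hf : ∀ x, HasDerivAt f (f' x) x) (hg : ∀ x, HasDerivAt g (g' x) x)
    (hf' : Continuous f') (hg' : Continuous g')
    (H : ℝ → ℝ → ℝ)
    (hH : ∀ u v, H u v = (μ {ω | u ≤ U ω ∧ v ≤ V ω}).toReal -
      (μ {ω | u ≤ U ω}).toReal * (μ {ω | v ≤ V ω}).toReal)
    (hint1 : Integrable (fun ω => f (U ω)) μ)
    (hint2 : Integrable (fun ω => g (V ω)) μ)
    (hint3 : Integrable (fun ω => f (U ω) * g (V ω)) μ)
    (hint4 : Integrable (fun p : ℝ × ℝ => f' p.1 * g' p.2 * H p.1 p.2)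
      (volume : Measure (ℝ × ℝ)))
    (hintH : Integrable (fun p : ℝ × ℝ => H p.1 p.2) (volume : Measure (ℝ × ℝ))) :
    (∫ ω, f (U ω) * g (V ω) ∂μ) - (∫ ω, f (U ω) ∂μ) * (∫ ω, g (V ω) ∂μ) =
      ∫ p : ℝ × ℝ, f' p.1 * g' p.2 * H p.1 p.2 := by
  classical
  set Q := ∫ ω, f (U ω) ∂μ with hQdef
  set R := ∫ ω, g (V ω) ∂μ with hRdef
  set P := ∫ ω, f (U ω) * g (V ω) ∂μ with hPdef
  set I := ∫ p : ℝ × ℝ, f' p.1 * g' p.2 * H p.1 p.2 with hIdef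
  have key : ∀ ε : ℝ, 0 < ε → |(P - Q * R) - I| ≤ 2 * ε := by
    intro ε hε

    set ψ : Ω → ℝ := fun ω => |f (U ω)| + |g (V ω)| + |f (U ω) * g (V ω)| with hψdef
    have hψint : Integrable ψ μ := (hint1.abs.add hint2.abs).add hint3.abs
    have hψnn : ∀ ω, 0 ≤ ψ ω := fun ω => by positivity
    set η := min 1 (ε / (2 + |Q| + |R|)) with hηdef
    have hc0 : (0:ℝ) < 2 + |Q| + |R| := by
      have := abs_nonneg Q; have := abs_nonneg R; linarith
    have hηpos : 0 < η := lt_min one_pos (div_pos hε hc0)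
    have hη1 : η ≤ 1 := min_le_left _ _
    have hηε : η * (2 + |Q| + |R|) ≤ ε := by
      calc η * (2 + |Q| + |R|) ≤ (ε / (2 + |Q| + |R|)) * (2 + |Q| + |R|) :=
            mul_le_mul_of_nonneg_right (min_le_right _ _) (le_of_lt hc0)
        _ = ε := div_mul_cancel₀ ε (ne_of_gt hc0)
    have hWabs : Integrable (fun p : ℝ × ℝ => |f' p.1 * g' p.2 * H p.1 p.2|)
        (volume : Measure (ℝ × ℝ)) := hint4.abs
    have hε4 : (0:ℝ) < ε / 4 := by linarith
    have hη16 : (0:ℝ) < η / 16 := by linarith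
    have hE1 := (tail_tendsto volume (fun p : ℝ × ℝ => p.1) measurable_fst _
      hWabs).eventually (eventually_le_nhds hε4)
    have hE2 := (tail_tendsto volume (fun p : ℝ × ℝ => -p.1) measurable_fst.neg _
      hWabs).eventually (eventually_le_nhds hε4)
    have hE3 := (tail_tendsto volume (fun p : ℝ × ℝ => p.2) measurable_snd _
      hWabs).eventually (eventually_le_nhds hε4)
    have hE4 := (tail_tendsto volume (fun p : ℝ × ℝ => -p.2) measurable_snd.neg _
      hWabs).eventually (eventually_le_nhds hε4)
    have hE5 := (tail_tendsto μ U hU ψ hψint).eventually (eventually_le_nhds hη16)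
    have hE6 := (tail_tendsto μ (fun ω => -U ω) hU.neg ψ hψint).eventually
      (eventually_le_nhds hη16)
    have hE7 := (tail_tendsto μ V hV ψ hψint).eventually (eventually_le_nhds hη16)
    have hE8 := (tail_tendsto μ (fun ω => -V ω) hV.neg ψ hψint).eventually
      (eventually_le_nhds hη16)
    obtain ⟨k, ⟨⟨hk1, hk2⟩, ⟨hk3, hk4⟩⟩, ⟨⟨hk5, hk6⟩, ⟨hk7, hk8⟩⟩⟩ :=
      (((hE1.and hE2).and (hE3.and hE4)).and ((hE5.and hE6).and (hE7.and hE8))).exists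
    -- choices of the cut points
    set w0 : Ω → ℝ := fun ω => 1 + |f (U ω)| with hw0def
    have hw0ge : ∀ ω, 1 ≤ w0 ω := fun ω =>
      show (1:ℝ) ≤ 1 + |f (U ω)| by linarith [abs_nonneg (f (U ω))]
    have hw0int : Integrable w0 μ := (integrable_const 1).add hint1.abs
    have hgw0 : Integrable (fun ω => |g (V ω)| * w0 ω) μ := by
      have he : (fun ω => |g (V ω)| * w0 ω)
          = fun ω => |g (V ω)| + |f (U ω) * g (V ω)| := by
        funext ω; rw [hw0def]; rw [abs_mul]; ring
      rw [he]; exact hint2.abs.add hint3.abs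
    obtain ⟨d, hdk, hd0⟩ := choose_cut μ V hV w0 hw0ge hw0int (fun x => |g x|)
      (fun x => abs_nonneg _) hgw0 (k : ℝ) (η / 16) hη16
    have hd : |g d| * ∫ ω in {ω | d ≤ V ω}, w0 ω ∂μ ≤ η / 16 := hd0
    have hgw0' : Integrable (fun ω => |g (-(-(V ω)))| * w0 ω) μ := by
      simpa using hgw0
    obtain ⟨c', hc'k, hc'0⟩ := choose_cut μ (fun ω => -V ω) hV.neg w0 hw0ge hw0int
      (fun x => |g (-x)|) (fun x => abs_nonneg _) hgw0' (k : ℝ) (η / 16) hη16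
    have hc : |g (-c')| * ∫ ω in {ω | c' ≤ -V ω}, w0 ω ∂μ ≤ η / 16 := hc'0
    set c := -c' with hcdef
    set w2 : Ω → ℝ := fun ω => (1 + |g (V ω)|) + (|g c| + |g d|) with hw2def
    have hw2ge : ∀ ω, 1 ≤ w2 ω := fun ω =>
      show (1:ℝ) ≤ (1 + |g (V ω)|) + (|g c| + |g d|) by
        linarith [abs_nonneg (g (V ω)), abs_nonneg (g c), abs_nonneg (g d)]
    have hw2int : Integrable w2 μ :=
      ((integrable_const 1).add hint2.abs).add (integrable_const _)
    have hfw2 : Integrable (fun ω => |f (U ω)| * w2 ω) μ := by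
      have he : (fun ω => |f (U ω)| * w2 ω)
          = fun ω => (|f (U ω)| + |f (U ω) * g (V ω)|) + |f (U ω)| * (|g c| + |g d|) := by
        funext ω; rw [hw2def, abs_mul]; ring
      rw [he]; exact (hint1.abs.add hint3.abs).add (hint1.abs.mul_const _)
    obtain ⟨b, hbk, hb0⟩ := choose_cut μ U hU w2 hw2ge hw2int (fun x => |f x|)
      (fun x => abs_nonneg _) hfw2 (k : ℝ) (η / 16) hη16
    have hb : |f b| * ∫ ω in {ω | b ≤ U ω}, w2 ω ∂μ ≤ η / 16 := hb0
    have hfw2' : Integrable (fun ω => |f (-(-(U ω)))| * w2 ω) μ := by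
      simpa using hfw2
    obtain ⟨a', ha'k, ha'0⟩ := choose_cut μ (fun ω => -U ω) hU.neg w2 hw2ge hw2int
      (fun x => |f (-x)|) (fun x => abs_nonneg _) hfw2' (k : ℝ) (η / 16) hη16
    have ha : |f (-a')| * ∫ ω in {ω | a' ≤ -U ω}, w2 ω ∂μ ≤ η / 16 := ha'0
    set a := -a' with hadef
    have hknn : (0:ℝ) ≤ (k : ℝ) := Nat.cast_nonneg k
    have hab : a ≤ b := by rw [hadef]; linarith
    have hcd : c ≤ d := by rw [hcdef]; linarith
    -- the rectangle
    set S : Set (ℝ × ℝ) := Set.Ioc a b ×ˢ Set.Ioc c d with hSdef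
    have hSmeas : MeasurableSet S := measurableSet_Ioc.prod measurableSet_Ioc
    have hrect := rect_identity μ U V hU hV f g f' g' hf hg hf' hg' hab hcd
    set fR : ℝ → ℝ := fun x => f (max a (min b x)) with hfRdef
    set gR : ℝ → ℝ := fun x => g (max c (min d x)) with hgRdef
    have hWS : ∫ p in S, f' p.1 * g' p.2 * H p.1 p.2
        = (∫ ω, (fR (U ω) - f a) * (gR (V ω) - g c) ∂μ)
          - (∫ ω, (fR (U ω) - f a) ∂μ) * ∫ ω, (gR (V ω) - g c) ∂μ := by
      rw [← hrect]
      apply integral_congr_ae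
      filter_upwards with p
      rw [hH p.1 p.2]

    have hfc : Continuous f := continuous_iff_continuousAt.mpr fun x => (hf x).continuousAt
    have hgc : Continuous g := continuous_iff_continuousAt.mpr fun x => (hg x).continuousAt
    obtain ⟨Bf, hBf⟩ : ∃ B, ∀ x ∈ Set.Icc a b, |f x| ≤ B := by
      obtain ⟨B, hB⟩ := isCompact_Icc.exists_bound_of_continuousOn
        (hfc.continuousOn (s := Set.Icc a b))
      exact ⟨B, fun x hx => by simpa [Real.norm_eq_abs] using hB x hx⟩
    obtain ⟨Bg, hBg⟩ : ∃ B, ∀ x ∈ Set.Icc c d, |g x| ≤ B := by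
      obtain ⟨B, hB⟩ := isCompact_Icc.exists_bound_of_continuousOn
        (hgc.continuousOn (s := Set.Icc c d))
      exact ⟨B, fun x hx => by simpa [Real.norm_eq_abs] using hB x hx⟩
    have hBf0 : 0 ≤ Bf := le_trans (abs_nonneg _) (hBf a ⟨le_refl a, hab⟩)
    have hBg0 : 0 ≤ Bg := le_trans (abs_nonneg _) (hBg c ⟨le_refl c, hcd⟩)
    have hclampU : ∀ x : ℝ, max a (min b x) ∈ Set.Icc a b :=
      fun x => ⟨le_max_left _ _, max_le hab (min_le_left _ _)⟩
    have hclampV : ∀ x : ℝ, max c (min d x) ∈ Set.Icc c d :=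
      fun x => ⟨le_max_left _ _, max_le hcd (min_le_left _ _)⟩
    have hfRmeas : Measurable fun ω => fR (U ω) := by
      have : Continuous fR := hfc.comp
        (continuous_const.max (continuous_const.min continuous_id))
      exact this.measurable.comp hU
    have hgRmeas : Measurable fun ω => gR (V ω) := by
      have : Continuous gR := hgc.comp
        (continuous_const.max (continuous_const.min continuous_id))
      exact this.measurable.comp hV
    have hfRU_int : Integrable (fun ω => fR (U ω)) μ := by
      apply Integrable.mono' (integrable_const Bf) hfRmeas.aestronglyMeasurable
      filter_upwards with ω
      simpa [Real.norm_eq_abs] using hBf _ (hclampU (U ω))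
    have hgRV_int : Integrable (fun ω => gR (V ω)) μ := by
      apply Integrable.mono' (integrable_const Bg) hgRmeas.aestronglyMeasurable
      filter_upwards with ω
      simpa [Real.norm_eq_abs] using hBg _ (hclampV (V ω))
    have hfgR_int : Integrable (fun ω => fR (U ω) * gR (V ω)) μ := by
      apply Integrable.mono' (integrable_const (Bf * Bg))
        (hfRmeas.mul hgRmeas).aestronglyMeasurable
      filter_upwards with ω
      rw [Real.norm_eq_abs, Pi.mul_apply, abs_mul]
      exact mul_le_mul (hBf _ (hclampU (U ω))) (hBg _ (hclampV (V ω)))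
        (abs_nonneg _) hBf0
    set Q' := ∫ ω, fR (U ω) ∂μ with hQ'def
    set R' := ∫ ω, gR (V ω) ∂μ with hR'def
    set P' := ∫ ω, fR (U ω) * gR (V ω) ∂μ with hP'def
    have hRHS : (∫ ω, (fR (U ω) - f a) * (gR (V ω) - g c) ∂μ)
        - (∫ ω, (fR (U ω) - f a) ∂μ) * (∫ ω, (gR (V ω) - g c) ∂μ)
        = P' - Q' * R' := by
      have e1 : ∫ ω, (fR (U ω) - f a) ∂μ = Q' - f a := by
        rw [integral_sub hfRU_int (integrable_const _), integral_const]
        simp; rfl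
      have e2 : ∫ ω, (gR (V ω) - g c) ∂μ = R' - g c := by
        rw [integral_sub hgRV_int (integrable_const _), integral_const]
        simp; rfl
      have e3 : ∫ ω, (fR (U ω) - f a) * (gR (V ω) - g c) ∂μ
          = P' - f a * R' - g c * Q' + f a * g c := by
        have he : (fun ω => (fR (U ω) - f a) * (gR (V ω) - g c))
            = fun ω => (fR (U ω) * gR (V ω) - f a * gR (V ω))
              - (g c * fR (U ω) - f a * g c) := by
          funext ω; ring
        have i1 : Integrable (fun ω => fR (U ω) * gR (V ω) - f a * gR (V ω)) μ :=
          hfgR_int.sub (hgRV_int.const_mul _)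
        have i2 : Integrable (fun ω => g c * fR (U ω) - f a * g c) μ :=
          (hfRU_int.const_mul _).sub (integrable_const _)
        rw [he, integral_sub i1 i2,
          integral_sub hfgR_int (hgRV_int.const_mul _),
          integral_sub (hfRU_int.const_mul _) (integrable_const _),
          integral_const_mul, integral_const_mul, integral_const]
        simp
        ring
      rw [e1, e2, e3]
      ring

    have hIS : |I - ∫ p in S, f' p.1 * g' p.2 * H p.1 p.2| ≤ ε := by
      have hsplit := integral_add_compl hSmeas hint4
      have he : I - (∫ p in S, f' p.1 * g' p.2 * H p.1 p.2)
          = ∫ p in Sᶜ, f' p.1 * g' p.2 * H p.1 p.2 := by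
        rw [hIdef, ← hsplit]; ring
      rw [he]
      have habs : |∫ p in Sᶜ, f' p.1 * g' p.2 * H p.1 p.2|
          ≤ ∫ p in Sᶜ, |f' p.1 * g' p.2 * H p.1 p.2| := by
        rw [← Real.norm_eq_abs]
        refine le_trans (norm_integral_le_integral_norm _) ?_
        apply le_of_eq
        apply integral_congr_ae
        filter_upwards with p
        rw [Real.norm_eq_abs]
      refine le_trans habs ?_
      have hm1 : MeasurableSet {p : ℝ × ℝ | (k:ℝ) ≤ p.1} :=
        measurableSet_le measurable_const measurable_fst
      have hm2 : MeasurableSet {p : ℝ × ℝ | (k:ℝ) ≤ -p.1} :=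
        measurableSet_le measurable_const measurable_fst.neg
      have hm3 : MeasurableSet {p : ℝ × ℝ | (k:ℝ) ≤ p.2} :=
        measurableSet_le measurable_const measurable_snd
      have hm4 : MeasurableSet {p : ℝ × ℝ | (k:ℝ) ≤ -p.2} :=
        measurableSet_le measurable_const measurable_snd.neg
      have hsub : Sᶜ ⊆ {p : ℝ × ℝ | (k:ℝ) ≤ p.1} ∪ {p : ℝ × ℝ | (k:ℝ) ≤ -p.1}
          ∪ {p : ℝ × ℝ | (k:ℝ) ≤ p.2} ∪ {p : ℝ × ℝ | (k:ℝ) ≤ -p.2} := by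
        intro p hp
        by_cases h1 : b < p.1
        · exact Or.inl (Or.inl (Or.inl (by simp only [Set.mem_setOf_eq]; linarith)))
        by_cases h2 : p.1 ≤ a
        · refine Or.inl (Or.inl (Or.inr ?_))
          simp only [Set.mem_setOf_eq]
          rw [hadef] at h2; linarith
        by_cases h3 : d < p.2
        · exact Or.inl (Or.inr (by simp only [Set.mem_setOf_eq]; linarith))
        by_cases h4 : p.2 ≤ c
        · refine Or.inr ?_
          simp only [Set.mem_setOf_eq]
          rw [hcdef] at h4; linarith
        · exfalso
          apply hp
          rw [hSdef]
          push_neg at h1 h2 h3 h4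
          exact ⟨⟨h2, h1⟩, ⟨h4, h3⟩⟩
      have := setIntegral_union_le_four (fun p => abs_nonneg _) hWabs hm1 hm2 hm3 hm4 hsub
      linarith

    have m_bU : MeasurableSet {ω | b < U ω} := measurableSet_lt measurable_const hU
    have m_Ua : MeasurableSet {ω | U ω < a} := measurableSet_lt hU measurable_const
    have m_dV : MeasurableSet {ω | d < V ω} := measurableSet_lt measurable_const hV
    have m_Vc : MeasurableSet {ω | V ω < c} := measurableSet_lt hV measurable_const
    have habs_sub : ∀ x y : ℝ, |x - y| ≤ |x| + |y| := fun x y => by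
      rw [sub_eq_add_neg]
      exact le_trans (abs_add_le _ _) (by rw [abs_neg])
    have hψf : ∀ ω, |f (U ω)| ≤ ψ ω := fun ω => by
      have h1 := abs_nonneg (g (V ω)); have h2 := abs_nonneg (f (U ω) * g (V ω))
      show |f (U ω)| ≤ |f (U ω)| + |g (V ω)| + |f (U ω) * g (V ω)|
      linarith
    have hψg : ∀ ω, |g (V ω)| ≤ ψ ω := fun ω => by
      have h1 := abs_nonneg (f (U ω)); have h2 := abs_nonneg (f (U ω) * g (V ω))
      show |g (V ω)| ≤ |f (U ω)| + |g (V ω)| + |f (U ω) * g (V ω)|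
      linarith
    have hψfg : ∀ ω, |f (U ω) * g (V ω)| ≤ ψ ω := fun ω => by
      have h1 := abs_nonneg (f (U ω)); have h2 := abs_nonneg (g (V ω))
      show |f (U ω) * g (V ω)| ≤ |f (U ω)| + |g (V ω)| + |f (U ω) * g (V ω)|
      linarith
    -- boundary-value bounds
    have hbound : ∀ (s t : Set Ω), MeasurableSet t → s ⊆ t → ∀ (w : Ω → ℝ),
        Integrable w μ → (∀ ω, 1 ≤ w ω) → ∀ C : ℝ,
        |C| * ∫ ω in t, w ω ∂μ ≤ η / 16 →
        ∫ ω in s, |C| ∂μ ≤ η / 16 := by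
      intro s t ht hsub w hw hwge C hC
      refine le_trans ?_ hC
      calc ∫ ω in s, |C| ∂μ = (μ s).toReal * |C| := by
            rw [setIntegral_const, smul_eq_mul, measureReal_def]
        _ ≤ (∫ ω in t, w ω ∂μ) * |C| := by
            apply mul_le_mul_of_nonneg_right ?_ (abs_nonneg _)
            calc (μ s).toReal ≤ (μ t).toReal :=
                  ENNReal.toReal_mono (measure_ne_top μ _) (measure_mono hsub)
              _ = ∫ ω in t, (1:ℝ) ∂μ := by rw [setIntegral_const, smul_eq_mul, mul_one, measureReal_def]
              _ ≤ ∫ ω in t, w ω ∂μ := setIntegral_mono_on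
                  ((integrable_const _).integrableOn) hw.integrableOn ht
                  (fun ω _ => hwge ω)
        _ = |C| * ∫ ω in t, w ω ∂μ := mul_comm _ _
    have hfbB : ∫ ω in {ω | b < U ω}, |f b| ∂μ ≤ η / 16 :=
      hbound {ω | b < U ω} {ω | b ≤ U ω} (measurableSet_le measurable_const hU)
        (fun ω h => by
          have h' : b < U ω := h
          show b ≤ U ω
          linarith) w2 hw2int hw2ge (f b) hb
    have hfaB : ∫ ω in {ω | U ω < a}, |f a| ∂μ ≤ η / 16 :=
      hbound {ω | U ω < a} {ω | a' ≤ -U ω} (measurableSet_le measurable_const hU.neg)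
        (fun ω h => by
          have h' : U ω < a := h
          rw [hadef] at h'
          show a' ≤ -U ω
          linarith) w2 hw2int hw2ge (f a) ha
    have hgdB : ∫ ω in {ω | d < V ω}, |g d| ∂μ ≤ η / 16 :=
      hbound {ω | d < V ω} {ω | d ≤ V ω} (measurableSet_le measurable_const hV)
        (fun ω h => by
          have h' : d < V ω := h
          show d ≤ V ω
          linarith) w0 hw0int hw0ge (g d) hd
    have hgcB : ∫ ω in {ω | V ω < c}, |g c| ∂μ ≤ η / 16 :=
      hbound {ω | V ω < c} {ω | c' ≤ -V ω} (measurableSet_le measurable_const hV.neg)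
        (fun ω h => by
          have h' : V ω < c := h
          rw [hcdef] at h'
          show c' ≤ -V ω
          linarith) w0 hw0int hw0ge (g c) hc
    -- ψ tail bounds
    have htbU : ∫ ω in {ω | b < U ω}, ψ ω ∂μ ≤ η / 16 := by
      refine le_trans (setIntegral_mono_set hψint.integrableOn
        (Filter.Eventually.of_forall hψnn) (Filter.Eventually.of_forall ?_)) hk5
      intro ω h
      have h' : b < U ω := h
      show (k:ℝ) ≤ U ω
      linarith
    have htUa : ∫ ω in {ω | U ω < a}, ψ ω ∂μ ≤ η / 16 := by
      refine le_trans (setIntegral_mono_set hψint.integrableOn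
        (Filter.Eventually.of_forall hψnn) (Filter.Eventually.of_forall ?_)) hk6
      intro ω h
      have h' : U ω < a := h
      rw [hadef] at h'
      show (k:ℝ) ≤ -U ω
      linarith
    have htdV : ∫ ω in {ω | d < V ω}, ψ ω ∂μ ≤ η / 16 := by
      refine le_trans (setIntegral_mono_set hψint.integrableOn
        (Filter.Eventually.of_forall hψnn) (Filter.Eventually.of_forall ?_)) hk7
      intro ω h
      have h' : d < V ω := h
      show (k:ℝ) ≤ V ω
      linarith
    have htVc : ∫ ω in {ω | V ω < c}, ψ ω ∂μ ≤ η / 16 := by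
      refine le_trans (setIntegral_mono_set hψint.integrableOn
        (Filter.Eventually.of_forall hψnn) (Filter.Eventually.of_forall ?_)) hk8
      intro ω h
      have h' : V ω < c := h
      rw [hcdef] at h'
      show (k:ℝ) ≤ -V ω
      linarith
    -- clamp case values
    have hfR_hi : ∀ ω, b < U ω → fR (U ω) = f b := by
      intro ω h
      simp only [hfRdef]
      rw [min_eq_left (le_of_lt h), max_eq_right hab]
    have hfR_lo : ∀ ω, U ω < a → fR (U ω) = f a := by
      intro ω h
      simp only [hfRdef]
      rw [min_eq_right (le_of_lt (lt_of_lt_of_le h hab)), max_eq_left (le_of_lt h)]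
    have hfR_mid : ∀ ω, a ≤ U ω → U ω ≤ b → fR (U ω) = f (U ω) := by
      intro ω h1 h2
      simp only [hfRdef]
      rw [min_eq_right h2, max_eq_right h1]
    have hgR_hi : ∀ ω, d < V ω → gR (V ω) = g d := by
      intro ω h
      simp only [hgRdef]
      rw [min_eq_left (le_of_lt h), max_eq_right hcd]
    have hgR_lo : ∀ ω, V ω < c → gR (V ω) = g c := by
      intro ω h
      simp only [hgRdef]
      rw [min_eq_right (le_of_lt (lt_of_lt_of_le h hcd)), max_eq_left (le_of_lt h)]
    have hgR_mid : ∀ ω, c ≤ V ω → V ω ≤ d → gR (V ω) = g (V ω) := by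
      intro ω h1 h2
      simp only [hgRdef]
      rw [min_eq_right h2, max_eq_right h1]
    -- |Q' - Q| ≤ η
    have hQest : |Q' - Q| ≤ η := by
      have he : Q' - Q = ∫ ω, (fR (U ω) - f (U ω)) ∂μ :=
        (integral_sub hfRU_int hint1).symm
      rw [he]
      set B1 : Ω → ℝ := ({ω | b < U ω}).indicator (fun ω => |f b| + ψ ω) with hB1
      set B2 : Ω → ℝ := ({ω | U ω < a}).indicator (fun ω => |f a| + ψ ω) with hB2
      have hB1int : Integrable B1 μ := ((integrable_const _).add hψint).indicator m_bU
      have hB2int : Integrable B2 μ := ((integrable_const _).add hψint).indicator m_Ua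
      have hBnn : ∀ ω, 0 ≤ B1 ω ∧ 0 ≤ B2 ω := by
        intro ω
        constructor <;> exact Set.indicator_nonneg
          (fun ω _ => add_nonneg (abs_nonneg _) (hψnn ω)) ω
      have hpt : ∀ ω, |fR (U ω) - f (U ω)| ≤ B1 ω + B2 ω := by
        intro ω
        rcases lt_or_ge b (U ω) with h | h
        · have h2 : ¬ (U ω < a) := by linarith
          rw [hfR_hi ω h, hB1, hB2, Set.indicator_of_mem (by exact h),
            Set.indicator_of_notMem (by exact h2)]
          have := habs_sub (f b) (f (U ω))
          have := hψf ω
          linarith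
        rcases lt_or_ge (U ω) a with h' | h'
        · have h2 : ¬ (b < U ω) := by linarith
          rw [hfR_lo ω h', hB1, hB2, Set.indicator_of_notMem (by exact h2),
            Set.indicator_of_mem (by exact h')]
          have := habs_sub (f a) (f (U ω))
          have := hψf ω
          linarith
        · rw [hfR_mid ω h' h, sub_self, abs_zero]
          have := (hBnn ω).1; have := (hBnn ω).2
          linarith
      have h1 : |∫ ω, (fR (U ω) - f (U ω)) ∂μ| ≤ ∫ ω, (B1 ω + B2 ω) ∂μ := by
        rw [← Real.norm_eq_abs]
        refine le_trans (norm_integral_le_integral_norm _)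
          (integral_mono (hfRU_int.sub hint1).norm (hB1int.add hB2int)
            (fun ω => by rw [Real.norm_eq_abs]; exact hpt ω))
      refine le_trans h1 ?_
      rw [integral_add hB1int hB2int, hB1, hB2, integral_indicator m_bU,
        integral_indicator m_Ua,
        integral_add ((integrable_const _).integrableOn) hψint.integrableOn,
        integral_add ((integrable_const _).integrableOn) hψint.integrableOn]
      linarith
    -- |R' - R| ≤ η
    have hRest : |R' - R| ≤ η := by
      have he : R' - R = ∫ ω, (gR (V ω) - g (V ω)) ∂μ :=
        (integral_sub hgRV_int hint2).symm
      rw [he]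
      set B1 : Ω → ℝ := ({ω | d < V ω}).indicator (fun ω => |g d| + ψ ω) with hB1
      set B2 : Ω → ℝ := ({ω | V ω < c}).indicator (fun ω => |g c| + ψ ω) with hB2
      have hB1int : Integrable B1 μ := ((integrable_const _).add hψint).indicator m_dV
      have hB2int : Integrable B2 μ := ((integrable_const _).add hψint).indicator m_Vc
      have hBnn : ∀ ω, 0 ≤ B1 ω ∧ 0 ≤ B2 ω := by
        intro ω
        constructor <;> exact Set.indicator_nonneg
          (fun ω _ => add_nonneg (abs_nonneg _) (hψnn ω)) ω
      have hpt : ∀ ω, |gR (V ω) - g (V ω)| ≤ B1 ω + B2 ω := by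
        intro ω
        rcases lt_or_ge d (V ω) with h | h
        · have h2 : ¬ (V ω < c) := by linarith
          rw [hgR_hi ω h, hB1, hB2, Set.indicator_of_mem (by exact h),
            Set.indicator_of_notMem (by exact h2)]
          have := habs_sub (g d) (g (V ω))
          have := hψg ω
          linarith
        rcases lt_or_ge (V ω) c with h' | h'
        · have h2 : ¬ (d < V ω) := by linarith
          rw [hgR_lo ω h', hB1, hB2, Set.indicator_of_notMem (by exact h2),
            Set.indicator_of_mem (by exact h')]
          have := habs_sub (g c) (g (V ω))
          have := hψg ω
          linarith
        · rw [hgR_mid ω h' h, sub_self, abs_zero]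
          have := (hBnn ω).1; have := (hBnn ω).2
          linarith
      have h1 : |∫ ω, (gR (V ω) - g (V ω)) ∂μ| ≤ ∫ ω, (B1 ω + B2 ω) ∂μ := by
        rw [← Real.norm_eq_abs]
        refine le_trans (norm_integral_le_integral_norm _)
          (integral_mono (hgRV_int.sub hint2).norm (hB1int.add hB2int)
            (fun ω => by rw [Real.norm_eq_abs]; exact hpt ω))
      refine le_trans h1 ?_
      rw [integral_add hB1int hB2int, hB1, hB2, integral_indicator m_dV,
        integral_indicator m_Vc,
        integral_add ((integrable_const _).integrableOn) hψint.integrableOn,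
        integral_add ((integrable_const _).integrableOn) hψint.integrableOn]
      linarith

    have hw0nn : ∀ ω, 0 ≤ w0 ω := fun ω => le_trans zero_le_one (hw0ge ω)
    have hw2nn : ∀ ω, 0 ≤ w2 ω := fun ω => le_trans zero_le_one (hw2ge ω)
    have hgRw2 : ∀ ω, |gR (V ω)| ≤ w2 ω := by
      intro ω
      show |gR (V ω)| ≤ (1 + |g (V ω)|) + (|g c| + |g d|)
      rcases lt_or_ge d (V ω) with h | h
      · rw [hgR_hi ω h]
        linarith [abs_nonneg (g (V ω)), abs_nonneg (g c)]
      rcases lt_or_ge (V ω) c with h' | h'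
      · rw [hgR_lo ω h']
        linarith [abs_nonneg (g (V ω)), abs_nonneg (g d)]
      · rw [hgR_mid ω h' h]
        linarith [abs_nonneg (g c), abs_nonneg (g d)]
    set bad : Set Ω := ({ω | b < U ω} ∪ {ω | U ω < a}) ∪ ({ω | d < V ω} ∪ {ω | V ω < c})
      with hbaddef
    have m_bad : MeasurableSet bad := ((m_bU.union m_Ua).union (m_dV.union m_Vc))
    have hPest : |P' - P| ≤ η := by
      set T1 : Ω → ℝ := bad.indicator (fun ω => 2 * ψ ω) with hT1
      set T2 : Ω → ℝ := ({ω | d < V ω}).indicator (fun ω => |g d| * w0 ω) with hT2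
      set T3 : Ω → ℝ := ({ω | V ω < c}).indicator (fun ω => |g c| * w0 ω) with hT3
      set T4 : Ω → ℝ := ({ω | b < U ω}).indicator (fun ω => |f b| * w2 ω) with hT4
      set T5 : Ω → ℝ := ({ω | U ω < a}).indicator (fun ω => |f a| * w2 ω) with hT5
      have hT1int : Integrable T1 μ := (hψint.const_mul 2).indicator m_bad
      have hT2int : Integrable T2 μ := (hw0int.const_mul _).indicator m_dV
      have hT3int : Integrable T3 μ := (hw0int.const_mul _).indicator m_Vc
      have hT4int : Integrable T4 μ := (hw2int.const_mul _).indicator m_bU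
      have hT5int : Integrable T5 μ := (hw2int.const_mul _).indicator m_Ua
      have hT1nn : ∀ ω, 0 ≤ T1 ω := fun ω => Set.indicator_nonneg
        (fun ω _ => by linarith [hψnn ω]) ω
      have hT2nn : ∀ ω, 0 ≤ T2 ω := fun ω => Set.indicator_nonneg
        (fun ω _ => mul_nonneg (abs_nonneg _) (hw0nn ω)) ω
      have hT3nn : ∀ ω, 0 ≤ T3 ω := fun ω => Set.indicator_nonneg
        (fun ω _ => mul_nonneg (abs_nonneg _) (hw0nn ω)) ω
      have hT4nn : ∀ ω, 0 ≤ T4 ω := fun ω => Set.indicator_nonneg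
        (fun ω _ => mul_nonneg (abs_nonneg _) (hw2nn ω)) ω
      have hT5nn : ∀ ω, 0 ≤ T5 ω := fun ω => Set.indicator_nonneg
        (fun ω _ => mul_nonneg (abs_nonneg _) (hw2nn ω)) ω
      have hpt : ∀ ω, |fR (U ω) * gR (V ω) - f (U ω) * g (V ω)|
          ≤ T1 ω + T2 ω + T3 ω + T4 ω + T5 ω := by
        intro ω
        have htri := habs_sub (fR (U ω) * gR (V ω)) (f (U ω) * g (V ω))
        have hfg := hψfg ω
        rcases lt_or_ge b (U ω) with h | h
        · have hmem : ω ∈ bad := Or.inl (Or.inl h)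
          have e1 : T1 ω = 2 * ψ ω := Set.indicator_of_mem hmem _
          have e4 : T4 ω = |f b| * w2 ω := Set.indicator_of_mem (show ω ∈ {ω | b < U ω} from h) _
          have hx : |fR (U ω) * gR (V ω)| ≤ |f b| * w2 ω := by
            rw [abs_mul, hfR_hi ω h]
            exact mul_le_mul_of_nonneg_left (hgRw2 ω) (abs_nonneg _)
          have := hT2nn ω; have := hT3nn ω; have := hT5nn ω
          have := hψnn ω
          linarith
        rcases lt_or_ge (U ω) a with h' | h'
        · have hmem : ω ∈ bad := Or.inl (Or.inr h')
          have e1 : T1 ω = 2 * ψ ω := Set.indicator_of_mem hmem _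
          have e5 : T5 ω = |f a| * w2 ω := Set.indicator_of_mem (show ω ∈ {ω | U ω < a} from h') _
          have hx : |fR (U ω) * gR (V ω)| ≤ |f a| * w2 ω := by
            rw [abs_mul, hfR_lo ω h']
            exact mul_le_mul_of_nonneg_left (hgRw2 ω) (abs_nonneg _)
          have := hT2nn ω; have := hT3nn ω; have := hT4nn ω
          have := hψnn ω
          linarith
        · have hfRm : fR (U ω) = f (U ω) := hfR_mid ω h' h
          rcases lt_or_ge d (V ω) with h2 | h2
          · have hmem : ω ∈ bad := Or.inr (Or.inl h2)
            have e1 : T1 ω = 2 * ψ ω := Set.indicator_of_mem hmem _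
            have e2 : T2 ω = |g d| * w0 ω := Set.indicator_of_mem (show ω ∈ {ω | d < V ω} from h2) _
            have hx : |fR (U ω) * gR (V ω)| ≤ |g d| * w0 ω := by
              rw [abs_mul, hfRm, hgR_hi ω h2]
              show |f (U ω)| * |g d| ≤ |g d| * (1 + |f (U ω)|)
              rw [mul_comm]
              apply mul_le_mul_of_nonneg_left ?_ (abs_nonneg _)
              linarith
            have := hT3nn ω; have := hT4nn ω; have := hT5nn ω
            have := hψnn ω
            linarith
          rcases lt_or_ge (V ω) c with h3 | h3
          · have hmem : ω ∈ bad := Or.inr (Or.inr h3)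
            have e1 : T1 ω = 2 * ψ ω := Set.indicator_of_mem hmem _
            have e3 : T3 ω = |g c| * w0 ω := Set.indicator_of_mem (show ω ∈ {ω | V ω < c} from h3) _
            have hx : |fR (U ω) * gR (V ω)| ≤ |g c| * w0 ω := by
              rw [abs_mul, hfRm, hgR_lo ω h3]
              show |f (U ω)| * |g c| ≤ |g c| * (1 + |f (U ω)|)
              rw [mul_comm]
              apply mul_le_mul_of_nonneg_left ?_ (abs_nonneg _)
              linarith
            have := hT2nn ω; have := hT4nn ω; have := hT5nn ω
            have := hψnn ω
            linarith
          · have hgRm : gR (V ω) = g (V ω) := hgR_mid ω h3 h2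
            rw [hfRm, hgRm, sub_self, abs_zero]
            have := hT1nn ω; have := hT2nn ω; have := hT3nn ω
            have := hT4nn ω; have := hT5nn ω
            linarith
      have he : P' - P = ∫ ω, (fR (U ω) * gR (V ω) - f (U ω) * g (V ω)) ∂μ :=
        (integral_sub hfgR_int hint3).symm
      have h1 : |P' - P| ≤ ∫ ω, (T1 ω + T2 ω + T3 ω + T4 ω + T5 ω) ∂μ := by
        rw [he, ← Real.norm_eq_abs]
        refine le_trans (norm_integral_le_integral_norm _)
          (integral_mono (hfgR_int.sub hint3).norm
            ((((hT1int.add hT2int).add hT3int).add hT4int).add hT5int)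
            (fun ω => by rw [Real.norm_eq_abs]; exact hpt ω))
      refine le_trans h1 ?_
      have i12 : Integrable (fun ω => T1 ω + T2 ω) μ := hT1int.add hT2int
      have i123 : Integrable (fun ω => T1 ω + T2 ω + T3 ω) μ := i12.add hT3int
      have i1234 : Integrable (fun ω => T1 ω + T2 ω + T3 ω + T4 ω) μ := i123.add hT4int
      rw [integral_add i1234 hT5int, integral_add i123 hT4int,
        integral_add i12 hT3int, integral_add hT1int hT2int]
      have e1 : ∫ ω, T1 ω ∂μ ≤ η / 2 := by
        rw [hT1, integral_indicator m_bad]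
        have e11 : ∫ ω in bad, 2 * ψ ω ∂μ = 2 * ∫ ω in bad, ψ ω ∂μ :=
          integral_const_mul 2 _
        rw [e11]
        have e12 : ∫ ω in bad, ψ ω ∂μ ≤ (∫ ω in {ω | b < U ω}, ψ ω ∂μ)
            + (∫ ω in {ω | U ω < a}, ψ ω ∂μ) + (∫ ω in {ω | d < V ω}, ψ ω ∂μ)
            + ∫ ω in {ω | V ω < c}, ψ ω ∂μ := by
          apply setIntegral_union_le_four hψnn hψint m_bU m_Ua m_dV m_Vc
          intro ω hω
          rcases hω with (h | h) | (h | h)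
          · exact Or.inl (Or.inl (Or.inl h))
          · exact Or.inl (Or.inl (Or.inr h))
          · exact Or.inl (Or.inr h)
          · exact Or.inr h
        linarith
      have e2 : ∫ ω, T2 ω ∂μ ≤ η / 16 := by
        rw [hT2, integral_indicator m_dV, integral_const_mul]
        refine le_trans ?_ hd
        apply mul_le_mul_of_nonneg_left ?_ (abs_nonneg _)
        apply setIntegral_mono_set hw0int.integrableOn
          (Filter.Eventually.of_forall hw0nn)
        apply Filter.Eventually.of_forall
        intro ω h
        have h' : d < V ω := h
        show d ≤ V ω
        linarith
      have e3 : ∫ ω, T3 ω ∂μ ≤ η / 16 := by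
        rw [hT3, integral_indicator m_Vc, integral_const_mul]
        refine le_trans ?_ hc
        apply mul_le_mul_of_nonneg_left ?_ (abs_nonneg _)
        apply setIntegral_mono_set hw0int.integrableOn
          (Filter.Eventually.of_forall hw0nn)
        apply Filter.Eventually.of_forall
        intro ω h
        have h' : V ω < c := h
        rw [hcdef] at h'
        show c' ≤ -V ω
        linarith
      have e4 : ∫ ω, T4 ω ∂μ ≤ η / 16 := by
        rw [hT4, integral_indicator m_bU, integral_const_mul]
        refine le_trans ?_ hb
        apply mul_le_mul_of_nonneg_left ?_ (abs_nonneg _)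
        apply setIntegral_mono_set hw2int.integrableOn
          (Filter.Eventually.of_forall hw2nn)
        apply Filter.Eventually.of_forall
        intro ω h
        have h' : b < U ω := h
        show b ≤ U ω
        linarith
      have e5 : ∫ ω, T5 ω ∂μ ≤ η / 16 := by
        rw [hT5, integral_indicator m_Ua, integral_const_mul]
        refine le_trans ?_ ha
        apply mul_le_mul_of_nonneg_left ?_ (abs_nonneg _)
        apply setIntegral_mono_set hw2int.integrableOn
          (Filter.Eventually.of_forall hw2nn)
        apply Filter.Eventually.of_forall
        intro ω h
        have h' : U ω < a := h
        rw [hadef] at h'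
        show a' ≤ -U ω
        linarith
      linarith
    -- final combination
    have hR'b : |R'| ≤ |R| + 1 := by
      have h1 : R' = R + (R' - R) := by ring
      calc |R'| = |R + (R' - R)| := by rw [← h1]
        _ ≤ |R| + |R' - R| := abs_add_le _ _
        _ ≤ |R| + 1 := by linarith [hRest, hη1]
    have hfinal1 : |(P - Q * R) - (P' - Q' * R')| ≤ ε := by
      have hsplit2 : (P - Q * R) - (P' - Q' * R')
          = (P - P') - Q * (R - R') - (Q - Q') * R' := by ring
      have h1 : |(P - P') - Q * (R - R') - (Q - Q') * R'|
          ≤ |P - P'| + |Q| * |R - R'| + |Q - Q'| * |R'| := by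
        calc |(P - P') - Q * (R - R') - (Q - Q') * R'|
            ≤ |(P - P') - Q * (R - R')| + |(Q - Q') * R'| := habs_sub _ _
          _ ≤ |P - P'| + |Q * (R - R')| + |(Q - Q') * R'| := by
              linarith [habs_sub (P - P') (Q * (R - R'))]
          _ = |P - P'| + |Q| * |R - R'| + |Q - Q'| * |R'| := by
              rw [abs_mul, abs_mul]
      rw [hsplit2]
      refine le_trans h1 ?_
      have hPP : |P - P'| ≤ η := by rw [abs_sub_comm]; exact hPest
      have hRR : |R - R'| ≤ η := by rw [abs_sub_comm]; exact hRest
      have hQQ : |Q - Q'| ≤ η := by rw [abs_sub_comm]; exact hQest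
      have h2 : |Q| * |R - R'| ≤ |Q| * η :=
        mul_le_mul_of_nonneg_left hRR (abs_nonneg _)
      have h3 : |Q - Q'| * |R'| ≤ η * (|R| + 1) :=
        mul_le_mul hQQ hR'b (abs_nonneg _) (le_of_lt hηpos)
      have h4 : η + |Q| * η + η * (|R| + 1) = η * (2 + |Q| + |R|) := by ring
      linarith [hηε]
    have hSI : ∫ p in S, f' p.1 * g' p.2 * H p.1 p.2 = P' - Q' * R' :=
      hWS.trans hRHS
    have hfinal2 : |(P' - Q' * R') - I| ≤ ε := by
      rw [← hSI, abs_sub_comm]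
      exact hIS
    calc |(P - Q * R) - I|
        = |((P - Q * R) - (P' - Q' * R')) + ((P' - Q' * R') - I)| := by ring_nf
      _ ≤ |(P - Q * R) - (P' - Q' * R')| + |(P' - Q' * R') - I| := abs_add_le _ _
      _ ≤ ε + ε := add_le_add hfinal1 hfinal2
      _ = 2 * ε := by ring
  have habs : |(P - Q * R) - I| = 0 := by
    by_contra hne
    have hpos : 0 < |(P - Q * R) - I| := lt_of_le_of_ne (abs_nonneg _) (Ne.symm hne)
    have := key (|(P - Q * R) - I| / 4) (by linarith)
    linarith
  have := abs_eq_zero.mp habs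
  linarith
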